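/- (Stokes-type identity) Let K be a field of characteristic zero, I a finite set with |I| ≥ 2, and x : I → K a vector with ∑_{i∈I} x_i = 0. Then for every polynomial f ∈ K[t_i : i ∈ I], ∫_I ∑_{i∈I} x_i (∂f/∂t_i) + ∑_{i∈I} x_i ∫_{I∖{i}} (f|_{t_i = 0}) = 0, where f|_{t_i=0} ∈ K[t_j : j ∈ I∖{i}] is the result of substituting t_i = 0 in f. -/

import Mathlib

/-- The linear functional `∫_I` on `K[t_i : i ∈ I]` determined on monomials by
`∫_I ∏ t_i^{ν_i} = (∏ ν_i!) / (n + ∑ ν_i)!`. -/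
noncomputable def simplexIntegral (K : Type*) [Field K] [CharZero K] {I : Type*}
    [Fintype I] (n : ℕ) (f : MvPolynomial I K) : K :=
  ∑ ν ∈ f.support, f.coeff ν *
    (((∏ i, Nat.factorial (ν i) : ℕ) : K) /
      ((Nat.factorial (n + ∑ i, ν i) : ℕ) : K))

/-- Substituting `t_i = 0` in `f`, viewed as a polynomial in the variables `I \ {i}`. -/
noncomputable def restrictAway {K : Type*} [CommSemiring K] {I : Type*} [DecidableEq I]
    (i : I) (f : MvPolynomial I K) : MvPolynomial {j : I // j ≠ i} K :=
  MvPolynomial.aeval (fun j : I => if h : j = i then 0 else MvPolynomial.X ⟨j, h⟩) f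

open MvPolynomial Finset

section Aux

variable {K : Type*} [Field K] [CharZero K] {I : Type*} [Fintype I] [DecidableEq I]

lemma simplexIntegral_eq_of_subset (n : ℕ) (f : MvPolynomial I K) {s : Finset (I →₀ ℕ)}
    (hs : f.support ⊆ s) :
    simplexIntegral K n f = ∑ ν ∈ s, f.coeff ν *
      (((∏ i, Nat.factorial (ν i) : ℕ) : K) / ((Nat.factorial (n + ∑ i, ν i) : ℕ) : K)) := by
  refine (Finset.sum_subset hs fun ν _ hν => ?_)
  rw [MvPolynomial.notMem_support_iff.1 hν, zero_mul]

lemma simplexIntegral_zero (n : ℕ) : simplexIntegral K n (0 : MvPolynomial I K) = 0 := by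
  simp [simplexIntegral]

lemma simplexIntegral_add (n : ℕ) (f g : MvPolynomial I K) :
    simplexIntegral K n (f + g) = simplexIntegral K n f + simplexIntegral K n g := by
  rw [simplexIntegral_eq_of_subset n (f + g) (MvPolynomial.support_add),
    simplexIntegral_eq_of_subset n f (Finset.subset_union_left),
    simplexIntegral_eq_of_subset n g (Finset.subset_union_right), ← Finset.sum_add_distrib]
  exact Finset.sum_congr rfl fun ν _ => by rw [MvPolynomial.coeff_add, add_mul]

lemma simplexIntegral_sum (n : ℕ) {α : Type*} (s : Finset α) (g : α → MvPolynomial I K) :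
    simplexIntegral K n (∑ a ∈ s, g a) = ∑ a ∈ s, simplexIntegral K n (g a) := by
  classical
  induction s using Finset.induction_on with
  | empty => simp [simplexIntegral_zero]
  | insert _ _ h ih => rw [Finset.sum_insert h, Finset.sum_insert h, simplexIntegral_add, ih]

lemma simplexIntegral_monomial (n : ℕ) (ν : I →₀ ℕ) (c : K) :
    simplexIntegral K n (MvPolynomial.monomial ν c) =
      c * (((∏ i, Nat.factorial (ν i) : ℕ) : K) /
        ((Nat.factorial (n + ∑ i, ν i) : ℕ) : K)) := by
  classical
  by_cases hc : c = 0
  · simp [hc, simplexIntegral]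
  · rw [simplexIntegral, MvPolynomial.support_monomial, if_neg hc, Finset.sum_singleton,
      MvPolynomial.coeff_monomial, if_pos rfl]

lemma restrictAway_monomial_ne (i : I) (ν : I →₀ ℕ) (c : K) (h : ν i ≠ 0) :
    restrictAway i (MvPolynomial.monomial ν c) = 0 := by
  rw [restrictAway, MvPolynomial.aeval_monomial]
  have : (ν.prod fun j k => (if h : j = i then 0 else (MvPolynomial.X ⟨j, h⟩ :
      MvPolynomial {j : I // j ≠ i} K)) ^ k) = 0 := by
    refine Finset.prod_eq_zero (Finsupp.mem_support_iff.2 h) ?_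
    simp [zero_pow h]
  rw [this, mul_zero]

lemma restrictAway_monomial_eq (i : I) (ν : I →₀ ℕ) (c : K) (h : ν i = 0) :
    restrictAway i (MvPolynomial.monomial ν c) =
      MvPolynomial.monomial (ν.subtypeDomain (· ≠ i)) c := by
  have hprod : (ν.prod fun j k => (if h : j = i then 0 else (MvPolynomial.X ⟨j, h⟩ :
      MvPolynomial {j : I // j ≠ i} K)) ^ k) =
      (ν.subtypeDomain (· ≠ i)).prod fun b k => MvPolynomial.X b ^ k := by
    rw [Finsupp.prod_fintype _ _ (fun j => pow_zero _),
      Finsupp.prod_fintype _ _ (fun b => pow_zero _)]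
    rw [← Finset.prod_erase (a := i) Finset.univ
        (f := fun j => (if h : j = i then 0 else (MvPolynomial.X ⟨j, h⟩ :
          MvPolynomial {j : I // j ≠ i} K)) ^ ν j) (by simp [h])]
    rw [Finset.prod_subtype (p := fun j : I => j ≠ i) (Finset.univ.erase i) (by simp) (fun j =>
      (if h : j = i then 0 else (MvPolynomial.X ⟨j, h⟩ :
        MvPolynomial {j : I // j ≠ i} K)) ^ ν j)]
    refine Finset.prod_congr rfl fun b _ => ?_
    rw [dif_neg b.2, Finsupp.subtypeDomain_apply]
  rw [restrictAway, MvPolynomial.aeval_monomial, MvPolynomial.algebraMap_eq, hprod,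
    ← MvPolynomial.monomial_eq]

end Aux

/-- Stokes-type identity: for `∑ x_i = 0`,
`∫_I ∑ x_i ∂f/∂t_i + ∑ x_i ∫_{I∖{i}} f|_{t_i = 0} = 0`. -/
theorem simplexIntegral_stokes (K : Type*) [Field K] [CharZero K]
    (I : Type*) [Fintype I] [DecidableEq I] (n : ℕ) (hn : 1 ≤ n)
    (hcard : Fintype.card I = n + 1) (x : I → K) (hx : ∑ i, x i = 0)
    (f : MvPolynomial I K) :
    simplexIntegral K n (∑ i, MvPolynomial.C (x i) * MvPolynomial.pderiv i f) +
      ∑ i, x i * simplexIntegral K (n - 1) (restrictAway i f) = 0 := by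
  induction f using MvPolynomial.induction_on' with
  | add p q hp hq =>
    have e1 : (∑ i, MvPolynomial.C (x i) * MvPolynomial.pderiv i (p + q)) =
        (∑ i, MvPolynomial.C (x i) * MvPolynomial.pderiv i p) +
        (∑ i, MvPolynomial.C (x i) * MvPolynomial.pderiv i q) := by
      rw [← Finset.sum_add_distrib]
      exact Finset.sum_congr rfl fun i _ => by rw [map_add, mul_add]
    have e2 : ∀ i : I, restrictAway i (p + q) = restrictAway i p + restrictAway i q :=
      fun i => map_add _ _ _
    rw [e1, simplexIntegral_add]
    have e3 : (∑ i, x i * simplexIntegral K (n - 1) (restrictAway i (p + q))) =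
        (∑ i, x i * simplexIntegral K (n - 1) (restrictAway i p)) +
        (∑ i, x i * simplexIntegral K (n - 1) (restrictAway i q)) := by
      rw [← Finset.sum_add_distrib]
      refine Finset.sum_congr rfl fun i _ => ?_
      rw [e2 i, simplexIntegral_add, mul_add]
    rw [e3]
    linear_combination hp + hq
  | monomial u a =>
    classical
    set A : K := ((∏ j, Nat.factorial (u j) : ℕ) : K) /
      ((Nat.factorial ((n - 1) + ∑ j, u j) : ℕ) : K) with hA
    have key : ∀ i : I,
        simplexIntegral K n (MvPolynomial.C (x i) *
            MvPolynomial.pderiv i (MvPolynomial.monomial u a)) +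
          x i * simplexIntegral K (n - 1) (restrictAway i (MvPolynomial.monomial u a)) =
          x i * (a * A) := by
      intro i
      rw [MvPolynomial.pderiv_monomial, MvPolynomial.C_mul_monomial,
        simplexIntegral_monomial]
      by_cases h : u i = 0
      · -- derivative term vanishes, restriction term contributes
        rw [restrictAway_monomial_eq i u a h, simplexIntegral_monomial]
        have hprod : (∏ b : {j : I // j ≠ i},
            Nat.factorial ((u.subtypeDomain (· ≠ i)) b)) = ∏ j, Nat.factorial (u j) := by
          have h1 : ∏ j ∈ Finset.univ.erase i, Nat.factorial (u j) =
              ∏ b : {j : I // j ≠ i}, Nat.factorial (u ↑b) :=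
            Finset.prod_subtype _ (by simp) _
          simp only [Finsupp.subtypeDomain_apply]
          rw [← h1, Finset.prod_erase _ (by rw [h]; rfl)]
        have hsum : (∑ b : {j : I // j ≠ i}, (u.subtypeDomain (· ≠ i)) b) = ∑ j, u j := by
          have h1 : ∑ j ∈ Finset.univ.erase i, u j =
              ∑ b : {j : I // j ≠ i}, u ↑b :=
            Finset.sum_subtype _ (by simp) _
          simp only [Finsupp.subtypeDomain_apply]
          rw [← h1, Finset.sum_erase _ h]
        rw [hprod, hsum, h, hA]
        push_cast
        ring
      · -- restriction term vanishes, derivative term contributes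
        rw [restrictAway_monomial_ne i u a h, simplexIntegral_zero, mul_zero, add_zero]
        have hui : 1 ≤ u i := Nat.one_le_iff_ne_zero.2 h
        have happ : ∀ j : I, ((u - Finsupp.single i 1 : I →₀ ℕ)) j =
            u j - (if i = j then 1 else 0) := by
          intro j; rw [Finsupp.tsub_apply, Finsupp.single_apply]
        have hp : u i * (∏ j, Nat.factorial ((u - Finsupp.single i 1 : I →₀ ℕ) j)) =
            ∏ j, Nat.factorial (u j) := by
          rw [← Finset.mul_prod_erase Finset.univ
              (fun j => Nat.factorial ((u - Finsupp.single i 1 : I →₀ ℕ) j)) (Finset.mem_univ i),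
            ← Finset.mul_prod_erase Finset.univ (fun j => Nat.factorial (u j))
              (Finset.mem_univ i), ← mul_assoc]
          congr 1
          · rw [happ i, if_pos rfl, Nat.mul_factorial_pred (Nat.pos_iff_ne_zero.1 (Nat.lt_of_lt_of_le Nat.zero_lt_one hui))]
          · refine Finset.prod_congr rfl fun j hj => ?_
            rw [happ j, if_neg (Finset.ne_of_mem_erase hj).symm, Nat.sub_zero]
        have hD : n + ∑ j, (u - Finsupp.single i 1 : I →₀ ℕ) j = (n - 1) + ∑ j, u j := by
          rw [← Finset.add_sum_erase Finset.univ (fun j => (u - Finsupp.single i 1 : I →₀ ℕ) j)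
              (Finset.mem_univ i),
            ← Finset.add_sum_erase Finset.univ (fun j => u j) (Finset.mem_univ i),
            happ i, if_pos rfl]
          have : ∑ j ∈ Finset.univ.erase i, (u - Finsupp.single i 1 : I →₀ ℕ) j =
              ∑ j ∈ Finset.univ.erase i, u j := by
            refine Finset.sum_congr rfl fun j hj => ?_
            rw [happ j, if_neg (Finset.ne_of_mem_erase hj).symm, Nat.sub_zero]
          rw [this]
          omega
        rw [hD]
        have : (x i * (a * (u i : K))) *
            (((∏ j, Nat.factorial ((u - Finsupp.single i 1 : I →₀ ℕ) j) : ℕ) : K) /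
              ((Nat.factorial ((n - 1) + ∑ j, u j) : ℕ) : K)) =
            x i * (a * (((u i * ∏ j, Nat.factorial ((u - Finsupp.single i 1 : I →₀ ℕ) j) : ℕ) : K) /
              ((Nat.factorial ((n - 1) + ∑ j, u j) : ℕ) : K))) := by
          push_cast; ring
        rw [this, hp, hA]
    calc simplexIntegral K n (∑ i, MvPolynomial.C (x i) *
            MvPolynomial.pderiv i (MvPolynomial.monomial u a)) +
          ∑ i, x i * simplexIntegral K (n - 1) (restrictAway i (MvPolynomial.monomial u a))
        = ∑ i, (simplexIntegral K n (MvPolynomial.C (x i) *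
            MvPolynomial.pderiv i (MvPolynomial.monomial u a)) +
          x i * simplexIntegral K (n - 1) (restrictAway i (MvPolynomial.monomial u a))) := by
          rw [simplexIntegral_sum, Finset.sum_add_distrib]
      _ = ∑ i, x i * (a * A) := Finset.sum_congr rfl fun i _ => key i
      _ = (∑ i, x i) * (a * A) := by rw [Finset.sum_mul]
      _ = 0 := by rw [hx, zero_mul]
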